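/- For the multistage convex problem with dynamic programming recursion Q_t(x_{t-1}) = inf{ f_t(x_t,x_{t-1}) + Q_{t+1}(x_t) : x_t ∈ X_t, g_t(x_t,x_{t-1}) ≤ 0, A_t x_t + B_t x_{t-1} = b_t } and Q_{T+1} ≡ 0, under assumptions (H1)-(a)–(d), each Q_t is convex, finite on X_{t-1}^ε, and continuous on X_{t-1}. -/

import Mathlib

open Matrix

section Helpers

open Metric Set Filter Topology

/-- A function lower semicontinuous jointly in a pair is lsc in the first argument. -/
lemma lsc_fst {α β γ : Type*} [TopologicalSpace α] [TopologicalSpace β] [Preorder γ]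
    {F : α × β → γ} (hF : LowerSemicontinuous F) (x : β) :
    LowerSemicontinuous fun u : α => F (u, x) := fun u y hy =>
  ((continuous_id.prodMk continuous_const).tendsto u).eventually (hF (u, x) y hy)

/-- Multiplying a non-`⊥` extended real by a positive real keeps it non-`⊥`. -/
lemma coe_mul_ne_bot {r : ℝ} (hr : 0 < r) {y : EReal} (hy : y ≠ ⊥) : (r : EReal) * y ≠ ⊥ := by
  by_cases hty : y = ⊤
  · rw [hty, EReal.coe_mul_top_of_pos hr]; exact top_ne_bot
  · rw [← EReal.coe_toReal hty hy, ← EReal.coe_mul]; exact EReal.coe_ne_bot _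

/-- A lower semicontinuous `EReal`-valued function on a nonempty compact closed set
attains its minimum. -/
lemma lsc_exists_min {α : Type*} [TopologicalSpace α] {K : Set α} (hK : IsCompact K)
    (hKc : IsClosed K) (hne : K.Nonempty) {φ : α → EReal} (h : LowerSemicontinuousOn φ K) :
    ∃ x ∈ K, ∀ y ∈ K, φ x ≤ φ y := by
  by_cases htop : ∀ x ∈ K, φ x = ⊤
  · obtain ⟨x₀, hx₀⟩ := hne
    exact ⟨x₀, hx₀, fun y hy => (htop y hy).symm ▸ le_top⟩
  push_neg at htop
  obtain ⟨x₀, hx₀K, hx₀⟩ := htop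
  set m := sInf (φ '' K) with hm
  have hmlt : m < ⊤ :=
    lt_of_le_of_lt (sInf_le ⟨x₀, hx₀K, rfl⟩) (lt_top_iff_ne_top.2 hx₀)
  have hclosed : ∀ a : EReal, IsClosed {x | x ∈ K ∧ φ x ≤ a} := by
    intro a
    apply isClosed_of_closure_subset
    intro x hx
    have hxK : x ∈ K := hKc.closure_subset (closure_mono (fun z hz => hz.1) hx)
    refine ⟨hxK, ?_⟩
    by_contra hgt
    push_neg at hgt
    have hev := h x hxK a hgt
    have hneB : (𝓝[{x | x ∈ K ∧ φ x ≤ a}] x).NeBot := mem_closure_iff_nhdsWithin_neBot.1 hx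
    have hev' : ∀ᶠ z in 𝓝[{x | x ∈ K ∧ φ x ≤ a}] x, a < φ z :=
      hev.filter_mono (nhdsWithin_mono x fun z hz => hz.1)
    have hev'' : ∀ᶠ z in 𝓝[{x | x ∈ K ∧ φ x ≤ a}] x, φ z ≤ a :=
      eventually_mem_nhdsWithin.mono fun z hz => hz.2
    obtain ⟨z, hz1, hz2⟩ := (hev'.and hev'').exists
    exact absurd hz2 (not_le.2 hz1)
  haveI : Nonempty {a : EReal // m < a} := ⟨⟨⊤, hmlt⟩⟩
  set C : {a : EReal // m < a} → Set α := fun a => {x | x ∈ K ∧ φ x ≤ a.1} with hC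
  have hCne : ∀ a, (C a).Nonempty := by
    rintro ⟨a, ha⟩
    obtain ⟨v, ⟨x, hxK, rfl⟩, hv⟩ := sInf_lt_iff.1 ha
    exact ⟨x, hxK, hv.le⟩
  have hCcp : ∀ a, IsCompact (C a) :=
    fun a => hK.of_isClosed_subset (hclosed a.1) fun x hx => hx.1
  have hCdir : Directed (· ⊇ ·) C := fun a b =>
    ⟨⟨min a.1 b.1, lt_min a.2 b.2⟩,
      fun x hx => ⟨hx.1, hx.2.trans (min_le_left _ _)⟩,
      fun x hx => ⟨hx.1, hx.2.trans (min_le_right _ _)⟩⟩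
  obtain ⟨x, hx⟩ := IsCompact.nonempty_iInter_of_directed_nonempty_isCompact_isClosed C hCdir
    hCne hCcp fun a => hclosed a.1
  have hxK : x ∈ K := (Set.mem_iInter.1 hx ⟨⊤, hmlt⟩).1
  refine ⟨x, hxK, fun y hy => ?_⟩
  have hxm : φ x ≤ m :=
    le_of_forall_gt_imp_ge_of_dense fun a ha => (Set.mem_iInter.1 hx ⟨a, ha⟩).2
  exact hxm.trans (sInf_le ⟨y, hy, rfl⟩)

end Helpers

/-- Under (H1), the cost-to-go functions `Q_t` of the multistage convex problem are
convex, finite on the ε-fattening `X_{t-1}^ε`, and continuous on `X_{t-1}`. -/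
theorem stmt_2 {n p q : ℕ} (T : ℕ) (hT : 1 ≤ T)
    (X : ℕ → Set (Fin n → ℝ)) (ε : ℝ) (hε : 0 < ε)
    (f : ℕ → (Fin n → ℝ) → (Fin n → ℝ) → EReal)
    (g : ℕ → (Fin n → ℝ) → (Fin n → ℝ) → Fin p → ℝ)
    (A B : ℕ → Matrix (Fin q) (Fin n) ℝ) (b : ℕ → Fin q → ℝ)
    -- (H1)-(a)
    (hXne : ∀ t, t ≤ T → (X t).Nonempty)
    (hXcv : ∀ t, t ≤ T → Convex ℝ (X t))
    (hXcp : ∀ t, t ≤ T → IsCompact (X t))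
    -- (H1)-(b): fₜ proper, convex, lower semicontinuous
    (hfproper : ∀ t, 1 ≤ t → t ≤ T → ∀ u x, f t u x ≠ ⊥)
    (hfcv : ∀ t, 1 ≤ t → t ≤ T → ∀ u₁ x₁ u₂ x₂, ∀ s : ℝ, 0 ≤ s → s ≤ 1 →
      f t (s • u₁ + (1 - s) • u₂) (s • x₁ + (1 - s) • x₂)
        ≤ (s : EReal) * f t u₁ x₁ + ((1 - s : ℝ) : EReal) * f t u₂ x₂)
    (hflsc : ∀ t, 1 ≤ t → t ≤ T →
      LowerSemicontinuous (fun z : (Fin n → ℝ) × (Fin n → ℝ) => f t z.1 z.2))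
    -- (H1)-(c): each component of gₜ convex and lsc
    (hgcv : ∀ t, 1 ≤ t → t ≤ T → ∀ i,
      ConvexOn ℝ Set.univ (fun z : (Fin n → ℝ) × (Fin n → ℝ) => g t z.1 z.2 i))
    (hglsc : ∀ t, 1 ≤ t → t ≤ T → ∀ i,
      LowerSemicontinuous (fun z : (Fin n → ℝ) × (Fin n → ℝ) => g t z.1 z.2 i))
    -- (H1)-(d): domain condition and recourse on the ε-fattening
    (hdom : ∀ t, 1 ≤ t → t ≤ T → ∀ u ∈ X t,
      ∀ x ∈ Metric.cthickening ε (X (t - 1)), f t u x ≠ ⊤)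
    (hrec : ∀ t, 1 ≤ t → t ≤ T → ∀ x ∈ Metric.cthickening ε (X (t - 1)),
      ∃ u ∈ X t, (∀ i, g t u x i ≤ 0) ∧ (A t).mulVec u + (B t).mulVec x = b t)
    -- the dynamic programming recursion
    (Q : ℕ → (Fin n → ℝ) → EReal)
    (hQT : ∀ x, Q (T + 1) x = 0)
    (hQ : ∀ t, 1 ≤ t → t ≤ T → ∀ x, Q t x =
      sInf {v : EReal | ∃ u ∈ X t, (∀ i, g t u x i ≤ 0) ∧
        (A t).mulVec u + (B t).mulVec x = b t ∧ v = f t u x + Q (t + 1) u}) :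
    ∀ t, 1 ≤ t → t ≤ T + 1 →
      (∀ x₁ x₂, ∀ s : ℝ, 0 ≤ s → s ≤ 1 →
        Q t (s • x₁ + (1 - s) • x₂)
          ≤ (s : EReal) * Q t x₁ + ((1 - s : ℝ) : EReal) * Q t x₂) ∧
      (∀ x ∈ Metric.cthickening ε (X (t - 1)), Q t x ≠ ⊤ ∧ Q t x ≠ ⊥) ∧
      ContinuousOn (Q t) (X (t - 1)) := by
  -- the strengthened induction predicate
  have key : ∀ d t, t + d = T + 1 → 1 ≤ t →
      (∀ x₁ x₂, ∀ s : ℝ, 0 ≤ s → s ≤ 1 →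
        Q t (s • x₁ + (1 - s) • x₂)
          ≤ (s : EReal) * Q t x₁ + ((1 - s : ℝ) : EReal) * Q t x₂) ∧
      (∀ x, Q t x ≠ ⊥) ∧
      (∀ x ∈ Metric.cthickening ε (X (t - 1)), Q t x ≠ ⊤) ∧
      ContinuousOn (Q t) (X (t - 1)) := by
    intro d
    induction d with
    | zero =>
      intro t ht h1t
      have hteq : t = T + 1 := by omega
      subst hteq
      refine ⟨?_, ?_, ?_, ?_⟩
      · intro x₁ x₂ s hs0 hs1
        simp [hQT, mul_zero]
      · intro x; rw [hQT]; exact EReal.zero_ne_bot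
      · intro x hx; rw [hQT]; exact EReal.zero_ne_top
      · exact continuousOn_const.congr fun x _ => hQT x
    | succ d ih =>
      intro t ht h1t
      have htT : t ≤ T := by omega
      obtain ⟨conv1, nbot1, ntop1, cont1⟩ := ih (t + 1) (by omega) (by omega)
      simp only [Nat.add_sub_cancel] at ntop1 cont1
      have hXtcp : IsCompact (X t) := hXcp t htT
      have hXtcv : Convex ℝ (X t) := hXcv t htT
      have ntop1' : ∀ u ∈ X t, Q (t + 1) u ≠ ⊤ := fun u hu =>
        ntop1 u (Metric.self_subset_cthickening _ hu)
      -- the feasible set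
      set F : (Fin n → ℝ) → Set (Fin n → ℝ) := fun x =>
        {u | u ∈ X t ∧ (∀ i, g t u x i ≤ 0) ∧ (A t).mulVec u + (B t).mulVec x = b t}
        with hF
      have hFsub : ∀ x, F x ⊆ X t := fun x u hu => hu.1
      have hmulA : Continuous fun u : Fin n → ℝ => (A t).mulVec u := by
        have h := (Matrix.mulVecLin (A t)).continuous_of_finiteDimensional
        exact h
      have hFclosed : ∀ x, IsClosed (F x) := by
        intro x
        have h1 : ∀ i, IsClosed {u : Fin n → ℝ | g t u x i ≤ 0} := by
          intro i
          have hlsc : LowerSemicontinuous fun u : Fin n → ℝ => g t u x i :=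
            lsc_fst (hglsc t h1t htT i) x
          exact hlsc.isClosed_preimage 0
        have h2 : IsClosed {u : Fin n → ℝ | (A t).mulVec u + (B t).mulVec x = b t} :=
          isClosed_eq (hmulA.add continuous_const) continuous_const
        have : F x = X t ∩ ((⋂ i, {u : Fin n → ℝ | g t u x i ≤ 0}) ∩
            {u : Fin n → ℝ | (A t).mulVec u + (B t).mulVec x = b t}) := by
          ext u
          simp only [hF, Set.mem_setOf_eq, Set.mem_inter_iff, Set.mem_iInter]
          try tauto
        rw [this]
        exact hXtcp.isClosed.inter ((isClosed_iInter h1).inter h2)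
      have hFcp : ∀ x, IsCompact (F x) := fun x =>
        hXtcp.of_isClosed_subset (hFclosed x) (hFsub x)
      -- the objective is lsc on the feasible set
      have hphilsc : ∀ x, LowerSemicontinuousOn
          (fun u => f t u x + Q (t + 1) u) (F x) := by
        intro x
        have h1 : LowerSemicontinuous fun u : Fin n → ℝ => f t u x :=
          lsc_fst (hflsc t h1t htT) x
        have h2 : LowerSemicontinuousOn (Q (t + 1)) (F x) :=
          (cont1.mono (hFsub x)).lowerSemicontinuousOn
        exact (h1.lowerSemicontinuousOn (F x)).add' h2 fun u hu =>
          EReal.continuousAt_add (Or.inr (nbot1 u)) (Or.inl (hfproper t h1t htT u x))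
      -- membership in the inf set
      have hmem : ∀ x u, u ∈ F x →
          f t u x + Q (t + 1) u ∈ {v : EReal | ∃ u ∈ X t, (∀ i, g t u x i ≤ 0) ∧
            (A t).mulVec u + (B t).mulVec x = b t ∧ v = f t u x + Q (t + 1) u} :=
        fun x u hu => ⟨u, hu.1, hu.2.1, hu.2.2, rfl⟩
      -- Q t is never ⊥
      have hnbot : ∀ x, Q t x ≠ ⊥ := by
        intro x
        rw [hQ t h1t htT x]
        by_cases hFne : (F x).Nonempty
        · obtain ⟨u₀, hu₀F, hu₀min⟩ :=
            lsc_exists_min (hFcp x) (hFclosed x) hFne (hphilsc x)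
          have hlb : f t u₀ x + Q (t + 1) u₀ ≤
              sInf {v : EReal | ∃ u ∈ X t, (∀ i, g t u x i ≤ 0) ∧
                (A t).mulVec u + (B t).mulVec x = b t ∧ v = f t u x + Q (t + 1) u} := by
            apply le_sInf
            rintro v ⟨u, huX, hg', hl', rfl⟩
            exact hu₀min u ⟨huX, hg', hl'⟩
          intro hbot
          rw [hbot, le_bot_iff, EReal.add_eq_bot_iff] at hlb
          rcases hlb with h | h
          · exact hfproper t h1t htT u₀ x h
          · exact nbot1 u₀ h
        · have hempty : {v : EReal | ∃ u ∈ X t, (∀ i, g t u x i ≤ 0) ∧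
              (A t).mulVec u + (B t).mulVec x = b t ∧ v = f t u x + Q (t + 1) u} = ∅ := by
            rw [Set.eq_empty_iff_forall_notMem]
            rintro v ⟨u, huX, hg', hl', rfl⟩
            exact hFne ⟨u, huX, hg', hl'⟩
          rw [hempty, sInf_empty]
          exact top_ne_bot
      -- Q t is not ⊤ on the fattening
      have hntop : ∀ x ∈ Metric.cthickening ε (X (t - 1)), Q t x ≠ ⊤ := by
        intro x hx
        obtain ⟨u, huX, hg', hl'⟩ := hrec t h1t htT x hx
        have hle : Q t x ≤ f t u x + Q (t + 1) u := by
          rw [hQ t h1t htT x]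
          exact sInf_le (hmem x u ⟨huX, hg', hl'⟩)
        have hft : f t u x + Q (t + 1) u < ⊤ :=
          EReal.add_lt_top (hdom t h1t htT u huX x hx) (ntop1' u huX)
        exact (lt_of_le_of_lt hle hft).ne
      -- convexity
      have hconv : ∀ x₁ x₂, ∀ s : ℝ, 0 ≤ s → s ≤ 1 →
          Q t (s • x₁ + (1 - s) • x₂)
            ≤ (s : EReal) * Q t x₁ + ((1 - s : ℝ) : EReal) * Q t x₂ := by
        intro x₁ x₂ s hs0 hs1
        rcases eq_or_lt_of_le hs0 with h0 | hs0pos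
        · simp [← h0]
        rcases eq_or_lt_of_le hs1 with h1 | hs1lt
        · simp [h1]
        have h1s : (0:ℝ) < 1 - s := by linarith
        by_cases ht1 : Q t x₁ = ⊤
        · rw [ht1, EReal.coe_mul_top_of_pos hs0pos,
            EReal.top_add_of_ne_bot (coe_mul_ne_bot h1s (hnbot x₂))]
          exact le_top
        by_cases ht2 : Q t x₂ = ⊤
        · rw [ht2, EReal.coe_mul_top_of_pos h1s, EReal.add_top_of_ne_bot
            (coe_mul_ne_bot hs0pos (hnbot x₁))]
          exact le_top
        set q₁ := (Q t x₁).toReal with hq₁def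
        set q₂ := (Q t x₂).toReal with hq₂def
        have hq₁ : Q t x₁ = ((q₁ : ℝ) : EReal) := (EReal.coe_toReal ht1 (hnbot x₁)).symm
        have hq₂ : Q t x₂ = ((q₂ : ℝ) : EReal) := (EReal.coe_toReal ht2 (hnbot x₂)).symm
        rw [hq₁, hq₂, ← EReal.coe_mul, ← EReal.coe_mul, ← EReal.coe_add]
        rw [← EReal.le_of_forall_lt_iff_le]
        intro z hz
        have hzr : s * q₁ + (1 - s) * q₂ < z := EReal.coe_lt_coe_iff.1 hz
        set δ := z - (s * q₁ + (1 - s) * q₂) with hδdef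
        have hδ : 0 < δ := by simp only [hδdef]; linarith
        -- extract near-optimal points
        have hlt₁ : Q t x₁ < ((q₁ + δ : ℝ) : EReal) := by
          rw [hq₁]; exact EReal.coe_lt_coe_iff.2 (by linarith)
        have hlt₂ : Q t x₂ < ((q₂ + δ : ℝ) : EReal) := by
          rw [hq₂]; exact EReal.coe_lt_coe_iff.2 (by linarith)
        rw [hQ t h1t htT x₁] at hlt₁
        rw [hQ t h1t htT x₂] at hlt₂
        obtain ⟨w₁, hw₁S, hw₁lt⟩ := sInf_lt_iff.1 hlt₁
        obtain ⟨w₂, hw₂S, hw₂lt⟩ := sInf_lt_iff.1 hlt₂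
        obtain ⟨u₁, hu₁X, hg₁, hl₁, hval₁⟩ := hw₁S
        obtain ⟨u₂, hu₂X, hg₂, hl₂, hval₂⟩ := hw₂S
        -- all quantities are finite
        have hQB₁ : Q (t + 1) u₁ ≠ ⊥ := nbot1 u₁
        have hQB₂ : Q (t + 1) u₂ ≠ ⊥ := nbot1 u₂
        have hQT₁ : Q (t + 1) u₁ ≠ ⊤ := ntop1' u₁ hu₁X
        have hQT₂ : Q (t + 1) u₂ ≠ ⊤ := ntop1' u₂ hu₂X
        have hfB₁ : f t u₁ x₁ ≠ ⊥ := hfproper t h1t htT u₁ x₁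
        have hfB₂ : f t u₂ x₂ ≠ ⊥ := hfproper t h1t htT u₂ x₂
        have hfT₁ : f t u₁ x₁ ≠ ⊤ := by
          intro h
          rw [hval₁, h, EReal.top_add_of_ne_bot hQB₁] at hw₁lt
          exact not_top_lt hw₁lt
        have hfT₂ : f t u₂ x₂ ≠ ⊤ := by
          intro h
          rw [hval₂, h, EReal.top_add_of_ne_bot hQB₂] at hw₂lt
          exact not_top_lt hw₂lt
        set a₁ := (f t u₁ x₁).toReal with ha₁def
        set a₂ := (f t u₂ x₂).toReal with ha₂def
        set b₁ := (Q (t + 1) u₁).toReal with hb₁def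
        set b₂ := (Q (t + 1) u₂).toReal with hb₂def
        have hfa₁ : ((a₁ : ℝ) : EReal) = f t u₁ x₁ := EReal.coe_toReal hfT₁ hfB₁
        have hfa₂ : ((a₂ : ℝ) : EReal) = f t u₂ x₂ := EReal.coe_toReal hfT₂ hfB₂
        have hfb₁ : ((b₁ : ℝ) : EReal) = Q (t + 1) u₁ := EReal.coe_toReal hQT₁ hQB₁
        have hfb₂ : ((b₂ : ℝ) : EReal) = Q (t + 1) u₂ := EReal.coe_toReal hQT₂ hQB₂
        have hr₁ : a₁ + b₁ < q₁ + δ := by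
          have : ((a₁ + b₁ : ℝ) : EReal) < ((q₁ + δ : ℝ) : EReal) := by
            rw [EReal.coe_add, hfa₁, hfb₁, ← hval₁]; exact hw₁lt
          exact EReal.coe_lt_coe_iff.1 this
        have hr₂ : a₂ + b₂ < q₂ + δ := by
          have : ((a₂ + b₂ : ℝ) : EReal) < ((q₂ + δ : ℝ) : EReal) := by
            rw [EReal.coe_add, hfa₂, hfb₂, ← hval₂]; exact hw₂lt
          exact EReal.coe_lt_coe_iff.1 this
        -- the convex combination is feasible
        set u := s • u₁ + (1 - s) • u₂ with hudef
        have huX : u ∈ X t := hXtcv hu₁X hu₂X hs0 (by linarith) (by ring)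
        have hgmid : ∀ i, g t u (s • x₁ + (1 - s) • x₂) i ≤ 0 := by
          intro i
          have hcc := (hgcv t h1t htT i).2 (Set.mem_univ (u₁, x₁))
            (Set.mem_univ (u₂, x₂)) hs0 (by linarith : (0:ℝ) ≤ 1 - s) (by ring)
          simp only [Prod.smul_mk, Prod.mk_add_mk, smul_eq_mul] at hcc
          have h₁ := hg₁ i
          have h₂ := hg₂ i
          nlinarith [hcc]
        have hlmid : (A t).mulVec u + (B t).mulVec (s • x₁ + (1 - s) • x₂) = b t := by
          rw [hudef, Matrix.mulVec_add, Matrix.mulVec_add, Matrix.mulVec_smul,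
            Matrix.mulVec_smul, Matrix.mulVec_smul, Matrix.mulVec_smul]
          have hcombo : s • ((A t).mulVec u₁ + (B t).mulVec x₁)
              + (1 - s) • ((A t).mulVec u₂ + (B t).mulVec x₂) = b t := by
            rw [hl₁, hl₂, Convex.combo_self (by ring : s + (1 - s) = 1)]
          rw [smul_add, smul_add] at hcombo
          rw [← hcombo]; abel
        have hQmid_le : Q t (s • x₁ + (1 - s) • x₂)
            ≤ f t u (s • x₁ + (1 - s) • x₂) + Q (t + 1) u := by
          rw [hQ t h1t htT (s • x₁ + (1 - s) • x₂)]
          exact sInf_le (hmem (s • x₁ + (1 - s) • x₂) u ⟨huX, hgmid, hlmid⟩)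
        have hfmid : f t u (s • x₁ + (1 - s) • x₂)
            ≤ ((s * a₁ + (1 - s) * a₂ : ℝ) : EReal) := by
          have h := hfcv t h1t htT u₁ x₁ u₂ x₂ s hs0 hs1
          rw [← hfa₁, ← hfa₂, ← EReal.coe_mul, ← EReal.coe_mul, ← EReal.coe_add] at h
          exact h
        have hQumid : Q (t + 1) u ≤ ((s * b₁ + (1 - s) * b₂ : ℝ) : EReal) := by
          have h := conv1 u₁ u₂ s hs0 hs1
          rw [← hfb₁, ← hfb₂, ← EReal.coe_mul, ← EReal.coe_mul, ← EReal.coe_add] at h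
          exact h
        calc Q t (s • x₁ + (1 - s) • x₂)
            ≤ f t u (s • x₁ + (1 - s) • x₂) + Q (t + 1) u := hQmid_le
          _ ≤ ((s * a₁ + (1 - s) * a₂ : ℝ) : EReal)
              + ((s * b₁ + (1 - s) * b₂ : ℝ) : EReal) := add_le_add hfmid hQumid
          _ = (((s * a₁ + (1 - s) * a₂) + (s * b₁ + (1 - s) * b₂) : ℝ) : EReal) :=
              (EReal.coe_add _ _).symm
          _ ≤ ((z : ℝ) : EReal) := by
              apply EReal.coe_le_coe_iff.2
              nlinarith [mul_le_mul_of_nonneg_left hr₁.le hs0,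
                mul_le_mul_of_nonneg_left hr₂.le (by linarith : (0:ℝ) ≤ 1 - s)]
      -- continuity
      have ht1sub : t - 1 ≤ T := by omega
      have hDconv : Convex ℝ (Metric.cthickening ε (X (t - 1))) :=
        (hXcv (t - 1) ht1sub).cthickening ε
      set Qr := fun x => (Q t x).toReal with hQrdef
      have hQrcv : ConvexOn ℝ (Metric.cthickening ε (X (t - 1))) Qr := by
        refine ⟨hDconv, fun x₁ hx₁ x₂ hx₂ a c ha hc hac => ?_⟩
        have hc' : c = 1 - a := by linarith
        subst hc'
        have hmid : a • x₁ + (1 - a) • x₂ ∈ Metric.cthickening ε (X (t - 1)) :=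
          hDconv hx₁ hx₂ ha hc hac
        have h := hconv x₁ x₂ a ha (by linarith)
        have e₁ : Q t x₁ = ((Qr x₁ : ℝ) : EReal) :=
          (EReal.coe_toReal (hntop x₁ hx₁) (hnbot x₁)).symm
        have e₂ : Q t x₂ = ((Qr x₂ : ℝ) : EReal) :=
          (EReal.coe_toReal (hntop x₂ hx₂) (hnbot x₂)).symm
        have emid : Q t (a • x₁ + (1 - a) • x₂)
            = ((Qr (a • x₁ + (1 - a) • x₂) : ℝ) : EReal) :=
          (EReal.coe_toReal (hntop _ hmid) (hnbot _)).symm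
        rw [e₁, e₂, emid, ← EReal.coe_mul, ← EReal.coe_mul, ← EReal.coe_add] at h
        have := EReal.coe_le_coe_iff.1 h
        simpa [smul_eq_mul] using this
      have hsub : X (t - 1) ⊆ interior (Metric.cthickening ε (X (t - 1))) :=
        (Metric.self_subset_thickening hε _).trans
          (Metric.thickening_subset_interior_cthickening _ _)
      have hcontQr : ContinuousOn Qr (X (t - 1)) :=
        hQrcv.continuousOn_interior.mono hsub
      have hcontQ : ContinuousOn (Q t) (X (t - 1)) := by
        refine (continuous_coe_real_ereal.comp_continuousOn hcontQr).congr fun x hx => ?_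
        exact (EReal.coe_toReal (hntop x (Metric.self_subset_cthickening _ hx))
          (hnbot x)).symm
      exact ⟨hconv, hnbot, hntop, hcontQ⟩
  intro t h1t htle
  obtain ⟨hc, hb, ht', hcont⟩ := key (T + 1 - t) t (by omega) h1t
  exact ⟨hc, fun x hx => ⟨ht' x hx, hb x⟩, hcont⟩
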